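/- Every subset S ⊆ ℕ with zero upper Banach density is an interpolation set for systems of zero topological entropy: for every bounded f : S → ℂ, extend f by 0 off S to get f̃ : ℕ₀ → ℂ; then the orbit closure X of f̃ under the left shift σ has topological entropy zero, f̃ is a transitive point of (X,σ), and the 0th-coordinate function F(x) = x(0) satisfies F(σⁿ f̃) = f(n) for all n ∈ S. -/

import Mathlib

open scoped Classical

/-- The upper Banach density of `A ⊆ ℕ` is zero:
`d*(A) = lim_{n→∞} sup_m |A ∩ [m, m+n)| / n = 0`. -/
def UpperBanachDensityZero (A : Set ℕ) : Prop :=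
  Filter.Tendsto
    (fun n : ℕ => ⨆ m : ℕ, (Nat.card ↥(A ∩ Set.Ico m (m + n)) : ℝ) / n)
    Filter.atTop (nhds 0)

open Filter Set Dynamics UniformSpace

def Went (k : ℕ) (ε : ℝ) : Set ((ℕ → ℂ) × (ℕ → ℂ)) := {p | ∀ i < k, dist (p.1 i) (p.2 i) ≤ ε}

lemma went_symm (k : ℕ) (ε : ℝ) : SetRel.IsSymm (Went k ε) := by
  exact ⟨fun _ _ h i hi => by rw [dist_comm]; exact h i hi⟩

lemma went_mono {k k' : ℕ} (h : k ≤ k') (ε : ℝ) : Went k' ε ⊆ Went k ε :=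
  fun p hp i hi => hp i (lt_of_lt_of_le hi h)

lemma went_mem_basis {V : Set ((ℕ → ℂ) × (ℕ → ℂ))} (hV : V ∈ uniformity (ℕ → ℂ)) :
    ∃ k ε, 0 < ε ∧ Went k ε ⊆ V := by
  rw [Pi.uniformity, Filter.mem_iInf] at hV
  obtain ⟨I, hI, Vi, hVi, rfl⟩ := hV
  -- Vi : I → Set _, each in comap
  have : ∀ i : I, ∃ εi > 0, ∀ p : (ℕ → ℂ) × (ℕ → ℂ), dist (p.1 i) (p.2 i) ≤ εi → p ∈ Vi i := by
    intro i
    have := hVi i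
    rw [Filter.mem_comap] at this
    obtain ⟨t, ht, hsub⟩ := this
    rw [Metric.mem_uniformity_dist] at ht
    obtain ⟨ε, hε, hd⟩ := ht
    exact ⟨ε/2, by linarith, fun p hp => hsub (hd (lt_of_le_of_lt hp (by linarith)))⟩
  choose εi hεi hball using this
  haveI : Finite I := hI
  rcases isEmpty_or_nonempty I with hI0 | hI0
  · exact ⟨0, 1, one_pos, fun p _ => by simp [Set.mem_iInter]⟩
  · haveI : Fintype I := Fintype.ofFinite I
    obtain ⟨k, hk⟩ : ∃ k : ℕ, ∀ i : I, (i : ℕ) < k :=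
      ⟨(Finset.univ.image fun i : I => (i : ℕ)).max' (by simp [Finset.univ_nonempty]) + 1,
       fun i => Nat.lt_succ_of_le (Finset.le_max' _ _ (by simp))⟩
    obtain ⟨ε, hε, hεle⟩ : ∃ ε > 0, ∀ i : I, ε ≤ εi i :=
      ⟨Finset.univ.inf' Finset.univ_nonempty εi, by
        simp only [gt_iff_lt, Finset.lt_inf'_iff]; exact fun i _ => hεi i,
       fun i => Finset.inf'_le _ (Finset.mem_univ i)⟩
    refine ⟨k, ε, hε, fun p hp => ?_⟩
    simp only [Set.mem_iInter]
    intro i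
    exact hball i p (le_trans (hp i (hk i)) (hεle i))

lemma grid_exists (C' : ℝ) {ε : ℝ} (hε : 0 < ε) :
    ∃ G : Finset ℂ, (0:ℂ) ∈ G ∧ ∀ z : ℂ, ‖z‖ ≤ C' → ∃ g ∈ G, dist z g ≤ ε := by
  have hc : TotallyBounded (Metric.closedBall (0:ℂ) C') :=
    (isCompact_closedBall 0 C').totallyBounded
  rw [Metric.totallyBounded_iff] at hc
  obtain ⟨t, htf, hcov⟩ := hc ε hε
  refine ⟨insert 0 htf.toFinset, Finset.mem_insert_self _ _, fun z hz => ?_⟩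
  have : z ∈ Metric.closedBall (0:ℂ) C' := by
    simpa [Metric.mem_closedBall, Complex.dist_eq] using hz
  obtain ⟨y, hy, hzy⟩ := Set.mem_iUnion₂.1 (hcov this)
  exact ⟨y, Finset.mem_insert_of_mem (htf.mem_toFinset.2 hy), le_of_lt hzy⟩

lemma count_lemma (N d : ℕ) (G : Finset ℂ) (h0 : (0:ℂ) ∈ G) :
    ((Fintype.piFinset fun _ : Fin N => G).filter
      fun v => (Finset.univ.filter fun t => v t ≠ 0).card ≤ d).card
    ≤ (∑ j ∈ Finset.range (d+1), N.choose j) * G.card ^ d := by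
  classical
  set T := ((Fintype.piFinset fun _ : Fin N => G).filter
      fun v => (Finset.univ.filter fun t => v t ≠ 0).card ≤ d) with hT
  set A : Finset (Finset (Fin N)) := Finset.univ.powerset.filter fun A => A.card ≤ d with hA
  have hmap : ∀ v ∈ T, (Finset.univ.filter fun t => v t ≠ 0) ∈ A := by
    intro v hv
    rw [hT, Finset.mem_filter] at hv
    exact Finset.mem_filter.2 ⟨Finset.mem_powerset.2 (Finset.subset_univ _), hv.2⟩
  rw [Finset.card_eq_sum_card_fiberwise hmap]
  have hfiber : ∀ A₀ ∈ A, (T.filter fun v => (Finset.univ.filter fun t => v t ≠ 0) = A₀).card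
      ≤ G.card ^ d := by
    intro A₀ hA₀
    have hcard : A₀.card ≤ d := (Finset.mem_filter.1 hA₀).2
    calc (T.filter fun v => (Finset.univ.filter fun t => v t ≠ 0) = A₀).card
        ≤ (Fintype.piFinset fun _ : (A₀ : Finset (Fin N)) => G).card := by
          apply Finset.card_le_card_of_injOn (fun v => fun i : A₀ => v i)
          · intro v hv
            rw [Finset.mem_coe, Finset.mem_filter, hT, Finset.mem_filter] at hv
            exact Fintype.mem_piFinset.2 fun i => Fintype.mem_piFinset.1 hv.1.1 i
          · intro v hv w hw hvw
            rw [Finset.mem_coe, Finset.mem_filter] at hv hw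
            funext t
            by_cases ht : t ∈ A₀
            · exact congrFun hvw ⟨t, ht⟩
            · have h1 : v t = 0 := by
                by_contra h
                exact ht (hv.2 ▸ Finset.mem_filter.2 ⟨Finset.mem_univ t, h⟩)
              have h2 : w t = 0 := by
                by_contra h
                exact ht (hw.2 ▸ Finset.mem_filter.2 ⟨Finset.mem_univ t, h⟩)
              rw [h1, h2]
      _ = G.card ^ A₀.card := by
          rw [Fintype.card_piFinset]
          simp [Finset.prod_const]
      _ ≤ G.card ^ d := Nat.pow_le_pow_right (Finset.card_pos.2 ⟨0, h0⟩) hcard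
  calc ∑ A₀ ∈ A, (T.filter fun v => (Finset.univ.filter fun t => v t ≠ 0) = A₀).card
      ≤ ∑ _A₀ ∈ A, G.card ^ d := Finset.sum_le_sum hfiber
    _ = A.card * G.card ^ d := by rw [Finset.sum_const, smul_eq_mul]
    _ ≤ (∑ j ∈ Finset.range (d+1), N.choose j) * G.card ^ d := by
        apply Nat.mul_le_mul_right
        calc A.card ≤ ((Finset.range (d+1)).biUnion fun j => Finset.powersetCard j Finset.univ).card := by
              apply Finset.card_le_card
              intro A₀ hA₀
              rw [hA, Finset.mem_filter] at hA₀
              exact Finset.mem_biUnion.2 ⟨A₀.card, Finset.mem_range.2 (Nat.lt_succ_of_le hA₀.2),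
                Finset.mem_powersetCard.2 ⟨Finset.subset_univ _, rfl⟩⟩
          _ ≤ ∑ j ∈ Finset.range (d+1), (Finset.powersetCard j (Finset.univ : Finset (Fin N))).card :=
              Finset.card_biUnion_le
          _ = ∑ j ∈ Finset.range (d+1), N.choose j := by
              apply Finset.sum_congr rfl
              intro j _
              rw [Finset.card_powersetCard, Finset.card_univ, Fintype.card_fin]

lemma binom_lemma (N d : ℕ) {δ : ℝ} (hδ : 0 < δ) (hδ1 : δ ≤ 1) (hd : d ≤ N) :
    (∑ j ∈ Finset.range (d+1), (N.choose j : ℝ)) ≤ (1+δ)^N / δ^d := by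
  rw [le_div_iff₀ (pow_pos hδ d)]
  calc (∑ j ∈ Finset.range (d+1), (N.choose j : ℝ)) * δ^d
      = ∑ j ∈ Finset.range (d+1), (N.choose j : ℝ) * δ^d := by rw [Finset.sum_mul]
    _ ≤ ∑ j ∈ Finset.range (d+1), (N.choose j : ℝ) * δ^j := by
        apply Finset.sum_le_sum
        intro j hj
        exact mul_le_mul_of_nonneg_left
          (pow_le_pow_of_le_one (le_of_lt hδ) hδ1 (Nat.le_of_lt_succ (Finset.mem_range.1 hj)))
          (Nat.cast_nonneg _)
    _ ≤ ∑ j ∈ Finset.range (N+1), (N.choose j : ℝ) * δ^j := by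
        apply Finset.sum_le_sum_of_subset_of_nonneg
        · exact Finset.range_subset_range.2 (by omega)
        · intro j _ _
          positivity
    _ = (1+δ)^N := by
        rw [add_comm (1:ℝ) δ, add_pow]
        apply Finset.sum_congr rfl
        intro j _
        rw [one_pow]
        ring


lemma count_le (S : Set ℕ) (m N : ℕ) : Nat.card ↥(S ∩ Set.Ico m (m+N)) ≤ N := by
  rw [Nat.card_coe_set_eq]
  calc (S ∩ Set.Ico m (m+N)).ncard ≤ (Set.Ico m (m+N)).ncard :=
        Set.ncard_le_ncard inter_subset_right (Set.finite_Ico m (m+N))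
    _ = N := by rw [Set.ncard_eq_toFinset_card']; simp

lemma density_count {S : Set ℕ} (hS : UpperBanachDensityZero S) {δ : ℝ} (hδ : 0 < δ) :
    ∃ N₁ : ℕ, 0 < N₁ ∧ ∀ N ≥ N₁, ∀ m, (Nat.card ↥(S ∩ Set.Ico m (m+N)) : ℝ) ≤ δ * N := by
  have h := hS.eventually (Filter.Tendsto.eventually_lt_const hδ tendsto_id)
  rw [eventually_atTop] at h
  obtain ⟨N₀, hN₀⟩ := h
  refine ⟨N₀ + 1, Nat.succ_pos _, fun N hN m => ?_⟩
  have hNpos : 0 < N := by omega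
  have hsup := hN₀ N (by omega)
  have hterm : (Nat.card ↥(S ∩ Set.Ico m (m+N)) : ℝ) / N
      ≤ ⨆ m : ℕ, (Nat.card ↥(S ∩ Set.Ico m (m+N)) : ℝ) / N := by
    apply le_ciSup (f := fun m => (Nat.card ↥(S ∩ Set.Ico m (m+N)) : ℝ) / N)
    refine ⟨1, fun x hx => ?_⟩
    obtain ⟨m', rfl⟩ := hx
    have := count_le S m' N
    rw [div_le_one (by exact_mod_cast hNpos)]
    exact_mod_cast this
  have : (Nat.card ↥(S ∩ Set.Ico m (m+N)) : ℝ) / N ≤ δ := le_of_lt (lt_of_le_of_lt hterm hsup)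
  calc (Nat.card ↥(S ∩ Set.Ico m (m+N)) : ℝ) = (Nat.card ↥(S ∩ Set.Ico m (m+N)) : ℝ) / N * N := by
        field_simp
    _ ≤ δ * N := mul_le_mul_of_nonneg_right this (Nat.cast_nonneg _)

lemma iter_apply (σ : (ℕ → ℂ) → (ℕ → ℂ)) (hσ : ∀ x n, σ x n = x (n + 1)) :
    ∀ (m : ℕ) (z : ℕ → ℂ) (t : ℕ), σ^[m] z t = z (t + m) := by
  intro m
  induction m with
  | zero => simp
  | succ m ih =>
    intro z t
    rw [Function.iterate_succ_apply, ih (σ z) t, hσ]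
    ring_nf

lemma closure_approx {R : Set (ℕ → ℂ)} {x : ℕ → ℂ} (hx : x ∈ closure R) (N : ℕ) {ε' : ℝ}
    (h : 0 < ε') : ∃ y ∈ R, ∀ t < N, dist (x t) (y t) < ε' := by
  have hopen : IsOpen {y : ℕ → ℂ | ∀ t < N, dist (x t) (y t) < ε'} := by
    have : {y : ℕ → ℂ | ∀ t < N, dist (x t) (y t) < ε'}
        = ⋂ t ∈ Finset.range N, (fun y : ℕ → ℂ => y t) ⁻¹' Metric.ball (x t) ε' := by
      ext y
      simp [Metric.mem_ball, dist_comm]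
    rw [this]
    exact isOpen_biInter_finset fun t _ => (Metric.isOpen_ball).preimage (continuous_apply t)
  have hmem : x ∈ {y : ℕ → ℂ | ∀ t < N, dist (x t) (y t) < ε'} := fun t _ => by simpa using h
  obtain ⟨y, hy1, hy2⟩ := (mem_closure_iff.1 hx) _ hopen hmem
  exact ⟨y, hy2, hy1⟩

lemma psi_tendsto (g : ℝ) (hg : 1 ≤ g) :
    Tendsto (fun t : ℝ => Real.log (1+t) + 2*t*Real.log (g/t)) (nhdsWithin 0 (Set.Ioi 0)) (nhds 0) := by
  have hgpos : (0:ℝ) < g := lt_of_lt_of_le one_pos hg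
  have h1 : Tendsto (fun t : ℝ => Real.log (1+t)) (nhds 0) (nhds 0) := by
    have : ContinuousAt (fun t : ℝ => Real.log (1+t)) 0 := by
      apply ContinuousAt.comp (x := (0:ℝ)) (g := Real.log)
      · simpa using Real.continuousAt_log (by norm_num : (1:ℝ) + 0 ≠ 0)
      · fun_prop
    simpa using this.tendsto
  have h2 : Tendsto (fun t : ℝ => 2*Real.log g*t) (nhds 0) (nhds 0) := by
    have hc : Continuous (fun t : ℝ => 2*Real.log g*t) := by fun_prop
    simpa using hc.tendsto 0
  have h3 : Tendsto (fun t : ℝ => (-2) * (Real.log t * t)) (nhdsWithin 0 (Set.Ioi 0)) (nhds 0) := by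
    have h := tendsto_log_mul_rpow_nhdsGT_zero (r := 1) zero_lt_one
    have h' : Tendsto (fun t : ℝ => Real.log t * t) (nhdsWithin 0 (Set.Ioi 0)) (nhds 0) := by
      apply h.congr
      intro t
      rw [Real.rpow_one]
    simpa using h'.const_mul (-2)
  have hsum : Tendsto (fun t : ℝ => Real.log (1+t) + (2*Real.log g*t + (-2) * (Real.log t * t)))
      (nhdsWithin 0 (Set.Ioi 0)) (nhds 0) := by
    have := (h1.mono_left nhdsWithin_le_nhds).add
      ((h2.mono_left nhdsWithin_le_nhds).add h3)
    simpa using this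
  apply hsum.congr'
  filter_upwards [self_mem_nhdsWithin] with t ht
  have ht' : (0:ℝ) < t := ht
  rw [Real.log_div (ne_of_gt hgpos) (ne_of_gt ht')]
  ring

lemma cover_lemma {S : Set ℕ} (hS : UpperBanachDensityZero S)
    {f ftilde : ℕ → ℂ} {C : ℝ} (hfC : ∀ n ∈ S, ‖f n‖ ≤ C)
    (hft : ∀ n : ℕ, ftilde n = if n ∈ S then f n else 0)
    {σ : (ℕ → ℂ) → (ℕ → ℂ)} (hσ : ∀ x n, σ x n = x (n + 1))
    {X : Set (ℕ → ℂ)} (hX : X = closure (Set.range fun m : ℕ => σ^[m] ftilde))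
    {k : ℕ} (hk : 1 ≤ k) {ε : ℝ} (hε : 0 < ε) {a : ℝ} (ha : 0 < a) :
    ∃ n : ℕ, 0 < n ∧ ∃ s : Finset (ℕ → ℂ), IsDynCoverOf σ X (Went k ε) n s ∧
      1 ≤ s.card ∧ Real.log s.card ≤ a * n := by
  -- uniform bound on ftilde
  set C' : ℝ := max C 0 with hC'def
  have hC' : ∀ t, ‖ftilde t‖ ≤ C' := by
    intro t
    rw [hft]
    split
    · exact le_trans (hfC t (by assumption)) (le_max_left _ _)
    · simp [hC'def]
  -- grid
  obtain ⟨G, hG0, hG⟩ := grid_exists C' (by positivity : (0:ℝ) < ε/3)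
  have hg1 : 1 ≤ G.card := Finset.card_pos.2 ⟨0, hG0⟩
  set g : ℝ := (G.card : ℝ) with hgdef
  have hg1' : (1:ℝ) ≤ g := by rw [hgdef]; exact_mod_cast hg1
  -- choose δ₀
  have hev1 : ∀ᶠ t in nhdsWithin 0 (Set.Ioi (0:ℝ)),
      Real.log (1+t) + 2*t*Real.log (g/t) < a/2 :=
    (psi_tendsto g hg1').eventually_lt_const (by positivity)
  have hev2 : Set.Ioo (0:ℝ) 1 ∈ nhdsWithin 0 (Set.Ioi (0:ℝ)) :=
    Ioo_mem_nhdsGT one_pos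
  obtain ⟨δ₀, hδψ, hδ₀mem⟩ := (hev1.and hev2).exists
  obtain ⟨hδ₀pos, hδ₀lt1⟩ := hδ₀mem
  have hδ₀le1 : δ₀ ≤ 1 := le_of_lt hδ₀lt1
  -- density
  obtain ⟨N₁, hN₁pos, hdens⟩ := density_count hS hδ₀pos
  -- choose N
  set N : ℕ := max (max N₁ (2*k)) ⌈(1:ℝ)/δ₀⌉₊ + 1 with hNdef
  have hNN₁ : N₁ ≤ N := by omega
  have hN2k : 2*k < N := by omega
  have hNpos : 0 < N := by omega
  have hδ₀N1 : (1:ℝ) ≤ δ₀ * N := by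
    have h1 : (⌈(1:ℝ)/δ₀⌉₊ : ℝ) ≤ N := by
      have : ⌈(1:ℝ)/δ₀⌉₊ ≤ N := by omega
      exact_mod_cast this
    have h2 : (1:ℝ)/δ₀ ≤ N := le_trans (Nat.le_ceil _) h1
    rw [div_le_iff₀ hδ₀pos] at h2
    linarith [mul_comm δ₀ (N:ℝ)]
  set n : ℕ := N - k with hndef
  have hnpos : 0 < n := by omega
  have hNnk : N = n + k := by omega
  have hn2 : (N:ℝ) ≤ 2 * n := by
    have : N ≤ 2 * n := by omega
    exact_mod_cast this
  -- choose d
  set d : ℕ := ⌈δ₀ * N⌉₊ with hddef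
  have hd1 : 1 ≤ d := Nat.one_le_iff_ne_zero.2 (by
    have : (0:ℝ) < δ₀ * N := by positivity
    simpa [hddef, Nat.ceil_eq_zero, not_le] using Nat.ceil_pos.2 this |>.ne')
  have hdN : d ≤ N := by
    have h1 : δ₀ * N ≤ (N:ℝ) := by nlinarith [Nat.cast_nonneg (α := ℝ) N]
    calc d = ⌈δ₀ * N⌉₊ := rfl
      _ ≤ ⌈(N:ℝ)⌉₊ := Nat.ceil_le_ceil h1
      _ = N := Nat.ceil_natCast N
  have hdR : (d:ℝ) ≤ 2*δ₀*N := by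
    have h1 : (d:ℝ) < δ₀ * N + 1 := Nat.ceil_lt_add_one (by positivity)
    nlinarith
  have hcount : ∀ m, Nat.card ↥(S ∩ Set.Ico m (m+N)) ≤ d := by
    intro m
    have h1 : (Nat.card ↥(S ∩ Set.Ico m (m+N)) : ℝ) ≤ δ₀ * N := hdens N hNN₁ m
    have h2 : (Nat.card ↥(S ∩ Set.Ico m (m+N)) : ℝ) ≤ (d:ℝ) := le_trans h1 (Nat.le_ceil _)
    exact_mod_cast h2
  -- the finite pattern set
  set T : Finset (Fin N → ℂ) := (Fintype.piFinset fun _ : Fin N => G).filter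
      (fun v => (Finset.univ.filter fun t => v t ≠ 0).card ≤ d) with hTdef
  set ext : (Fin N → ℂ) → (ℕ → ℂ) := fun v t => if h : t < N then v ⟨t, h⟩ else 0 with hextdef
  set s : Finset (ℕ → ℂ) := T.image ext with hsdef
  refine ⟨n, hnpos, s, ?_, ?_, ?_⟩
  · -- the cover property
    intro x hx
    rw [hX] at hx
    obtain ⟨y, hyR, hyx⟩ := closure_approx hx N (by positivity : (0:ℝ) < ε/3)
    obtain ⟨m, hm⟩ := hyR
    have hy' : y = σ^[m] ftilde := hm.symm
    subst hy'
    have happ : ∀ t < N, dist (x t) (ftilde (t + m)) < ε/3 := by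
      intro t ht
      have := hyx t ht
      rwa [iter_apply σ hσ m ftilde t] at this
    -- define the pattern
    set v : Fin N → ℂ := fun t =>
      if h : ((t:ℕ) + m) ∈ S then Classical.choose (hG (ftilde ((t:ℕ) + m)) (hC' _)) else 0
      with hvdef
    have hvG : ∀ t, v t ∈ G := by
      intro t
      by_cases hts : ((t:ℕ)+m) ∈ S
      · simp only [hvdef, dif_pos hts]
        exact (Classical.choose_spec (hG (ftilde ((t:ℕ) + m)) (hC' _))).1
      · simp only [hvdef, dif_neg hts]
        exact hG0
    have hvdist : ∀ t : Fin N, dist (v t) (ftilde ((t:ℕ) + m)) ≤ ε/3 := by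
      intro t
      by_cases hts : ((t:ℕ)+m) ∈ S
      · simp only [hvdef, dif_pos hts]
        rw [dist_comm]
        exact (Classical.choose_spec (hG (ftilde ((t:ℕ) + m)) (hC' _))).2
      · simp only [hvdef, dif_neg hts]
        have : ftilde ((t:ℕ) + m) = 0 := by rw [hft, if_neg hts]
        simp only [this, dist_zero_right, norm_zero]
        positivity
    have hvT : v ∈ T := by
      rw [hTdef, Finset.mem_filter]
      constructor
      · exact Fintype.mem_piFinset.2 hvG
      · -- support bound
        have hsub : (Finset.univ.filter fun t : Fin N => v t ≠ 0) ⊆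
            (Finset.univ.filter fun t : Fin N => ((t:ℕ) + m) ∈ S) := by
          intro t ht
          rw [Finset.mem_filter] at ht ⊢
          refine ⟨Finset.mem_univ _, ?_⟩
          by_contra h
          exact ht.2 (by simp only [hvdef]; simp [h])
        apply le_trans (Finset.card_le_card hsub)
        -- inject into S ∩ Ico m (m+N)
        have hfin : (S ∩ Set.Ico m (m+N)).Finite := (Set.finite_Ico m (m+N)).inter_of_right S
        have hcards : (Finset.univ.filter fun t : Fin N => ((t:ℕ) + m) ∈ S).card
            ≤ hfin.toFinset.card := by
          refine Finset.card_le_card_of_injOn (fun t => (t:ℕ) + m) ?_ ?_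
          · intro t ht
            rw [Finset.mem_coe, Finset.mem_filter] at ht
            rw [Finset.mem_coe, Set.Finite.mem_toFinset]
            refine ⟨ht.2, ?_⟩
            simp only [Set.mem_Ico]
            have := t.isLt
            omega
          · intro t _ t' _ h
            have h' : (t:ℕ) + m = (t':ℕ) + m := h
            exact Fin.ext (by omega)
        apply le_trans hcards
        have : hfin.toFinset.card = Nat.card ↥(S ∩ Set.Ico m (m+N)) := by
          rw [Nat.card_coe_set_eq, Set.ncard_eq_toFinset_card _ hfin]
        rw [this]
        exact hcount m
    -- x is in the ball around ext v
    refine ⟨ext v, ?_, ?_⟩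
    · rw [hsdef]
      exact Finset.mem_coe.2 (Finset.mem_image_of_mem ext hvT)
    · rw [mem_dynEntourage]
      intro j hj
      intro i hi
      simp only [Prod.fst, Prod.snd]
      rw [iter_apply σ hσ j (ext v) i, iter_apply σ hσ j x i]
      rw [dist_comm]
      have htN : i + j < N := by omega
      have h1 : ext v (i + j) = v ⟨i + j, htN⟩ := by
        rw [hextdef]
        simp [htN]
      rw [h1]
      calc dist (v ⟨i + j, htN⟩) (x (i + j))
          ≤ dist (v ⟨i + j, htN⟩) (ftilde ((i+j) + m)) + dist (ftilde ((i+j) + m)) (x (i+j)) :=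
            dist_triangle _ _ _
        _ ≤ ε/3 + ε/3 := by
            apply add_le_add
            · exact hvdist ⟨i + j, htN⟩
            · rw [dist_comm]; exact le_of_lt (happ (i+j) htN)
        _ ≤ ε := by linarith
  · -- nonempty
    apply Finset.card_pos.2
    rw [hsdef]
    refine ⟨ext (fun _ => 0), ?_⟩
    apply Finset.mem_image_of_mem
    rw [hTdef, Finset.mem_filter]
    constructor
    · exact Fintype.mem_piFinset.2 fun _ => hG0
    · simp
  · -- cardinality bound
    have hcard1 : s.card ≤ (∑ j ∈ Finset.range (d+1), N.choose j) * G.card ^ d := by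
      rw [hsdef, hTdef]
      exact le_trans (Finset.card_image_le) (count_lemma N d G hG0)
    have hcard2 : (s.card : ℝ) ≤ (1+δ₀)^N * (g/δ₀)^d := by
      calc (s.card : ℝ) ≤ (∑ j ∈ Finset.range (d+1), (N.choose j : ℝ)) * g ^ d := by
            rw [hgdef]
            exact_mod_cast hcard1
        _ ≤ ((1+δ₀)^N / δ₀^d) * g^d := by
            apply mul_le_mul_of_nonneg_right (binom_lemma N d hδ₀pos hδ₀le1 hdN) (pow_nonneg (le_trans zero_le_one hg1') _)
        _ = (1+δ₀)^N * (g/δ₀)^d := by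
            rw [div_pow]
            field_simp
  -- now log bound
    have hspos : (1:ℝ) ≤ (s.card : ℝ) := by
      have : 0 < s.card := by
        apply Finset.card_pos.2
        rw [hsdef]
        refine ⟨ext (fun _ => 0), ?_⟩
        apply Finset.mem_image_of_mem
        rw [hTdef, Finset.mem_filter]
        exact ⟨Fintype.mem_piFinset.2 fun _ => hG0, by simp⟩
      exact_mod_cast this
    have hlog : Real.log s.card ≤ N * Real.log (1+δ₀) + d * Real.log (g/δ₀) := by
      calc Real.log s.card ≤ Real.log ((1+δ₀)^N * (g/δ₀)^d) :=
            Real.log_le_log (by linarith) hcard2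
        _ = N * Real.log (1+δ₀) + d * Real.log (g/δ₀) := by
            rw [Real.log_mul (pow_ne_zero _ (by linarith)) (pow_ne_zero _ (div_ne_zero (by linarith) hδ₀pos.ne')), Real.log_pow, Real.log_pow]
    have hloggd : 0 ≤ Real.log (g/δ₀) := by
      apply Real.log_nonneg
      rw [le_div_iff₀ hδ₀pos]
      nlinarith
    have hlog1d : 0 ≤ Real.log (1+δ₀) := Real.log_nonneg (by linarith)
    calc Real.log s.card ≤ N * Real.log (1+δ₀) + d * Real.log (g/δ₀) := hlog
      _ ≤ N * Real.log (1+δ₀) + (2*δ₀*N) * Real.log (g/δ₀) :=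
          add_le_add (le_refl _) (mul_le_mul_of_nonneg_right hdR hloggd)
      _ = N * (Real.log (1+δ₀) + 2*δ₀*Real.log (g/δ₀)) := by ring
      _ ≤ N * (a/2) := by
          apply mul_le_mul_of_nonneg_left _ (Nat.cast_nonneg _)
          exact le_of_lt hδψ
      _ ≤ (2*n) * (a/2) := mul_le_mul_of_nonneg_right hn2 (by positivity)
      _ = a * n := by ring

/-- If `S ⊆ ℕ` has zero upper Banach density and `f : S → ℂ` is bounded, then
extending `f` by `0` off `S` to `f̃ : ℕ₀ → ℂ`, the orbit closure `X` of `f̃` under the left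
shift `σ` is `σ`-invariant, has topological entropy zero, `f̃` is a transitive point of
`(X,σ)`, and the continuous 0th-coordinate function `F(x) = x 0` satisfies
`F(σⁿ f̃) = f(n)` for all `n ∈ S`. -/
theorem stmt9 (S : Set ℕ) (hS : UpperBanachDensityZero S)
    (f : ℕ → ℂ) (hf : ∃ C : ℝ, ∀ n ∈ S, ‖f n‖ ≤ C)
    (ftilde : ℕ → ℂ) (hft : ∀ n : ℕ, ftilde n = if n ∈ S then f n else 0)
    (σ : (ℕ → ℂ) → (ℕ → ℂ)) (hσ : ∀ x n, σ x n = x (n + 1))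
    (X : Set (ℕ → ℂ)) (hX : X = closure (Set.range fun m : ℕ => σ^[m] ftilde)) :
    Set.MapsTo σ X X ∧
    Dynamics.coverEntropy σ X = 0 ∧
    ftilde ∈ X ∧
    X = closure (Set.range fun m : ℕ => σ^[m] ftilde) ∧
    Continuous (fun x : ℕ → ℂ => x 0) ∧
    ∀ n ∈ S, (σ^[n] ftilde) 0 = f n := by
  obtain ⟨C, hfC⟩ := hf
  have hcont : Continuous σ := by
    have h : σ = fun x (n : ℕ) => x (n+1) := by funext x n; exact hσ x n
    rw [h]
    exact continuous_pi fun n => continuous_apply (n+1)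
  have hmaps : Set.MapsTo σ X X := by
    rw [hX]
    have h1 : Set.MapsTo σ (Set.range fun m : ℕ => σ^[m] ftilde)
        (Set.range fun m : ℕ => σ^[m] ftilde) := by
      rintro y ⟨m, rfl⟩
      exact ⟨m+1, Function.iterate_succ_apply' σ m ftilde⟩
    exact h1.closure hcont
  have hmem : ftilde ∈ X := by
    rw [hX]
    exact subset_closure ⟨0, rfl⟩
  refine ⟨hmaps, ?_, hmem, hX, continuous_apply 0, ?_⟩
  · apply le_antisymm
    · apply iSup₂_le
      intro U hU
      obtain ⟨V, hV, hVsymm, hVU⟩ := comp_symm_mem_uniformity_sets hU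
      obtain ⟨k₀, ε, hε, hWV⟩ := went_mem_basis hV
      set k := max k₀ 1 with hkdef
      have hWV' : Went k ε ⊆ V := subset_trans (went_mono (le_max_left _ _) ε) hWV
      have hcomp : SetRel.comp (Went k ε) (Went k ε) ⊆ U :=
        subset_trans (SetRel.comp_subset_comp hWV' hWV') hVU
      have key : ∀ a : ℝ, 0 < a → coverEntropyEntourage σ X U ≤ (a : EReal) := by
        intro a ha
        obtain ⟨n, hn, s, hcov, hs1, hlog⟩ :=
          cover_lemma hS hfC hft hσ hX (le_max_right k₀ 1) hε ha
        have hstep : coverEntropyEntourage σ X U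
            ≤ ENNReal.log (s.card : ENNReal) / (n : EReal) := by
          refine le_trans (coverEntropyEntourage_antitone σ X hcomp) ?_
          haveI := went_symm k ε
          exact hcov.coverEntropyEntourage_le_log_card_div hmaps hn.ne'
        refine le_trans hstep ?_
        have hcard : ENNReal.log (s.card : ENNReal) = ((Real.log s.card : ℝ) : EReal) := by
          rw [← ENNReal.ofReal_natCast, ENNReal.log_ofReal_of_pos (by exact_mod_cast hs1)]
        rw [hcard]
        have hn' : ((n : ℝ) : EReal) = (n : EReal) := by
          rw [EReal.coe_coe_eq_natCast]
        rw [← hn']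
        rw [← EReal.coe_div]
        rw [EReal.coe_le_coe_iff]
        rw [div_le_iff₀ (by exact_mod_cast hn)]
        linarith [hlog]
      by_contra hlt
      have h0 : (0 : EReal) < coverEntropyEntourage σ X U := lt_of_not_ge hlt
      obtain ⟨a, ha0, haE⟩ := EReal.exists_between_coe_real h0
      have : 0 < a := by exact_mod_cast ha0
      exact absurd (key a this) (not_le.2 haE)
    · exact coverEntropy_nonneg σ ⟨ftilde, hmem⟩
  · intro n hn
    rw [iter_apply σ hσ n ftilde 0, Nat.zero_add, hft, if_pos hn]
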